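/- For all integers n ≥ 2 and s, r ≥ 2, the number of n-ary quasigroups of composite order sr satisfies |Q(n,sr)| ≥ |Q(n,r)| · |Q(n,s)|^{r^n} > |Q(n,s)|^{r^n}. -/

import Mathlib

/-- An `n`-ary quasigroup on `S`. -/
def IsNQuasigroup {S : Type*} {n : ℕ} (f : (Fin n → S) → S) : Prop :=
  ∀ (i : Fin n) (x : Fin n → S), Function.Bijective fun a => f (Function.update x i a)

/-- `|Q(n,k)|`: the number of `n`-ary quasigroup operations on a fixed
`k`-element set. -/
noncomputable def numQuasigroups (n k : ℕ) : ℕ :=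
  Nat.card {f : (Fin n → Fin k) → Fin k // IsNQuasigroup f}

section Aux

variable {n : ℕ} {A B : Type*}

lemma isNQuasigroup_map (e : A ≃ B) {f : (Fin n → A) → A} (hf : IsNQuasigroup f) :
    IsNQuasigroup (fun x => e (f (fun i => e.symm (x i)))) := by
  intro i x
  have key : (fun a : B => e (f (fun j => e.symm (Function.update x i a j))))
      = (e ∘ (fun a : A => f (Function.update (fun j => e.symm (x j)) i a)) ∘ e.symm) := by
    funext a
    simp only [Function.comp_apply]
    refine congrArg (fun y => e (f y)) ?_
    funext j
    rcases eq_or_ne j i with rfl | hji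
    · simp
    · simp [Function.update_of_ne hji]
  show Function.Bijective (fun a : B => e (f (fun j => e.symm (Function.update x i a j))))
  rw [key]
  exact e.bijective.comp ((hf i (fun j => e.symm (x j))).comp e.symm.bijective)

/-- Transport of quasigroups along an equivalence of the base set. -/
def quasiEquiv (e : A ≃ B) :
    {f : (Fin n → A) → A // IsNQuasigroup f} ≃ {f : (Fin n → B) → B // IsNQuasigroup f} where
  toFun f := ⟨fun x => e (f.1 (fun i => e.symm (x i))), isNQuasigroup_map e f.2⟩
  invFun f := ⟨fun x => e.symm (f.1 (fun i => e (x i))), isNQuasigroup_map e.symm f.2⟩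
  left_inv f := by ext x; simp
  right_inv f := by ext x; simp

lemma numQuasigroups_eq_card (k : ℕ) (e : A ≃ Fin k) :
    numQuasigroups n k = Nat.card {f : (Fin n → A) → A // IsNQuasigroup f} :=
  Nat.card_congr (quasiEquiv e).symm

/-- The sum-plus-constant quasigroup on `ZMod k`. -/
lemma isNQuasigroup_sum (k : ℕ) (c : ZMod k) :
    IsNQuasigroup (fun x : Fin n → ZMod k => c + ∑ i, x i) := by
  intro i x
  have key : (fun a : ZMod k => c + ∑ j, Function.update x i a j)
      = fun a : ZMod k => a + (c + ∑ j ∈ Finset.univ \ {i}, x j) := by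
    funext a
    rw [Finset.sum_update_of_mem (Finset.mem_univ i)]
    ring
  rw [key]
  exact (Equiv.addRight (c + ∑ j ∈ Finset.univ \ {i}, x j)).bijective

end Aux

section Main

variable {n s r : ℕ}

/-- The composite quasigroup construction on `Fin s × Fin r`. -/
lemma isNQuasigroup_prod
    (h : {f : (Fin n → Fin r) → Fin r // IsNQuasigroup f})
    (g : (Fin n → Fin r) → {f : (Fin n → Fin s) → Fin s // IsNQuasigroup f}) :
    IsNQuasigroup (fun x : Fin n → Fin s × Fin r =>
      ((g (fun i => (x i).2)).1 (fun i => (x i).1), h.1 (fun i => (x i).2))) := by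
  intro i x
  set x1 : Fin n → Fin s := fun j => (x j).1 with hx1
  set x2 : Fin n → Fin r := fun j => (x j).2 with hx2
  have e1 : ∀ (a : Fin s × Fin r) (j : Fin n),
      (Function.update x i a j).1 = Function.update x1 i a.1 j := by
    intro a j
    rcases eq_or_ne j i with rfl | hji
    · simp
    · simp [Function.update_of_ne hji, hx1]
  have e2 : ∀ (a : Fin s × Fin r) (j : Fin n),
      (Function.update x i a j).2 = Function.update x2 i a.2 j := by
    intro a j
    rcases eq_or_ne j i with rfl | hji
    · simp
    · simp [Function.update_of_ne hji, hx2]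
  have key : (fun a : Fin s × Fin r =>
      ((g (fun j => (Function.update x i a j).2)).1 (fun j => (Function.update x i a j).1),
        h.1 (fun j => (Function.update x i a j).2)))
      = fun a : Fin s × Fin r =>
        ((g (Function.update x2 i a.2)).1 (Function.update x1 i a.1),
          h.1 (Function.update x2 i a.2)) := by
    funext a
    simp only [e1, e2]
  rw [show (fun a : Fin s × Fin r =>
      ((g (fun j => (Function.update x i a j).2)).1 (fun j => (Function.update x i a j).1),
        h.1 (fun j => (Function.update x i a j).2))) = _ from key]
  constructor
  · intro a b hab
    have h2 : a.2 = b.2 := (h.2 i x2).1 (congrArg Prod.snd hab)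
    have h1 : a.1 = b.1 := by
      have := congrArg Prod.fst hab
      simp only at this
      rw [h2] at this
      exact ((g (Function.update x2 i b.2)).2 i x1).1 this
    exact Prod.ext h1 h2
  · intro ⟨c, d⟩
    obtain ⟨b2, hb2⟩ := (h.2 i x2).2 d
    obtain ⟨a1, ha1⟩ := ((g (Function.update x2 i b2)).2 i x1).2 c
    exact ⟨(a1, b2), by simp [ha1, hb2]⟩

end Main

/-- `|Q(n,sr)| ≥ |Q(n,r)|·|Q(n,s)|^{rⁿ} > |Q(n,s)|^{rⁿ}`. -/
theorem numQuasigroups_composite {n s r : ℕ} (hn : 2 ≤ n) (hs : 2 ≤ s) (hr : 2 ≤ r) :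
    numQuasigroups n (s * r) ≥ numQuasigroups n r * numQuasigroups n s ^ r ^ n ∧
    numQuasigroups n r * numQuasigroups n s ^ r ^ n > numQuasigroups n s ^ r ^ n := by
  haveI hs0 : NeZero s := ⟨by omega⟩
  haveI hr0 : NeZero r := ⟨by omega⟩
  haveI : Fact (1 < r) := ⟨hr⟩
  -- transport to ZMod for examples
  have ezs : ZMod s ≃ Fin s := Fintype.equivFinOfCardEq (ZMod.card s)
  have ezr : ZMod r ≃ Fin r := Fintype.equivFinOfCardEq (ZMod.card r)
  -- nonemptiness of Q(n,s)
  have hQs_pos : 0 < numQuasigroups n s := by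
    rw [numQuasigroups_eq_card s ezs]
    have : Nonempty {f : (Fin n → ZMod s) → ZMod s // IsNQuasigroup f} :=
      ⟨⟨_, isNQuasigroup_sum s 0⟩⟩
    exact Nat.card_pos
  -- Q(n,r) has at least two elements
  have hQr_two : 2 ≤ numQuasigroups n r := by
    rw [numQuasigroups_eq_card r ezr]
    have hne : (⟨_, isNQuasigroup_sum r 0⟩ :
        {f : (Fin n → ZMod r) → ZMod r // IsNQuasigroup f})
        ≠ ⟨_, isNQuasigroup_sum r 1⟩ := by
      intro hcon
      have := congrFun (congrArg Subtype.val hcon) (fun _ => 0)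
      simp only [Finset.sum_const_zero, add_zero, zero_add] at this
      exact zero_ne_one (α := ZMod r) this
    have : Nontrivial {f : (Fin n → ZMod r) → ZMod r // IsNQuasigroup f} := ⟨_, _, hne⟩
    exact Finite.one_lt_card
  -- the injection giving the main inequality
  have hmain : numQuasigroups n r * numQuasigroups n s ^ r ^ n ≤ numQuasigroups n (s * r) := by
    rw [numQuasigroups_eq_card (A := Fin s × Fin r) (s * r) finProdFinEquiv]
    set Qr := {f : (Fin n → Fin r) → Fin r // IsNQuasigroup f}
    set Qs := {f : (Fin n → Fin s) → Fin s // IsNQuasigroup f}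
    set Qsr := {f : (Fin n → Fin s × Fin r) → Fin s × Fin r // IsNQuasigroup f}
    have hcard : numQuasigroups n r * numQuasigroups n s ^ r ^ n
        = Nat.card (Qr × ((Fin n → Fin r) → Qs)) := by
      rw [Nat.card_prod, Nat.card_fun]
      congr 2
      rw [Nat.card_fun]
      simp [Nat.card_eq_fintype_card]
    rw [hcard]
    refine Nat.card_le_card_of_injective
      (fun p : Qr × ((Fin n → Fin r) → Qs) =>
        (⟨fun x => ((p.2 (fun i => (x i).2)).1 (fun i => (x i).1), p.1.1 (fun i => (x i).2)),
          isNQuasigroup_prod p.1 p.2⟩ : Qsr)) ?_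
    rintro ⟨h1, g1⟩ ⟨h2, g2⟩ hpq
    have hval := congrArg Subtype.val hpq
    simp only at hval
    have hh : h1 = h2 := by
      apply Subtype.ext
      funext b
      have := congrFun hval (fun j => ((0 : Fin s), b j))
      simpa using congrArg Prod.snd this
    have hg : g1 = g2 := by
      funext b
      apply Subtype.ext
      funext a
      have := congrFun hval (fun j => (a j, b j))
      simpa using congrArg Prod.fst this
    simp [hh, hg]
  refine ⟨hmain, ?_⟩
  have hpow : 0 < numQuasigroups n s ^ r ^ n := pow_pos hQs_pos _
  calc numQuasigroups n s ^ r ^ n = 1 * numQuasigroups n s ^ r ^ n := (one_mul _).symm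
    _ < numQuasigroups n r * numQuasigroups n s ^ r ^ n :=
        Nat.mul_lt_mul_of_lt_of_le (by omega) le_rfl hpow
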